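/- arXiv:1307.1512 — 3 statements merged into one kernel-verified Lean document; each statement's English description precedes it below -/
import Mathlib

section
/- Let V ⊆ ℝ^{2m} be an n-dimensional subspace that is α-slant with α ≠ π/2 with respect to a compatible complex structure J₀ (i.e., for every nonzero X ∈ V, the angle between J₀X and V equals α; equivalently ‖π_V(J₀X)‖ = cos(α)‖X‖ for all X ∈ V). Then J_V := sec(α)·(π_V ∘ J₀|_V) is a complex structure on V compatible with the induced inner product (J_V² = -I and J_V preserves the inner product). In particular, n is even. -/
open scoped RealInnerProductSpace

/-- An `α`-slant subspace `V` of `ℝ^{2m}` (with `cos α ≠ 0`) carries a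
compatible complex structure `J_V = sec α · (π_V ∘ J₀|_V)`; in particular `dim V`
is even. -/
theorem slant_subspace_induced_complex_structure
    {m : ℕ}
    (J₀ : EuclideanSpace ℝ (Fin (2 * m)) →ₗ[ℝ] EuclideanSpace ℝ (Fin (2 * m)))
    (hJ2 : ∀ x, J₀ (J₀ x) = -x)
    (hJinner : ∀ x y, ⟪J₀ x, J₀ y⟫ = ⟪x, y⟫)
    (V : Submodule ℝ (EuclideanSpace ℝ (Fin (2 * m))))
    (α : ℝ) (hα : Real.cos α ≠ 0)
    (hslant : ∀ x : V, ‖(Submodule.orthogonalProjectionOnto V (J₀ (x : EuclideanSpace ℝ (Fin (2 * m)))) : V)‖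
      = Real.cos α * ‖x‖)
    (JV : V → V)
    (hJV : ∀ x : V,
      JV x = (Real.cos α)⁻¹ •
        (Submodule.orthogonalProjectionOnto V (J₀ (x : EuclideanSpace ℝ (Fin (2 * m)))) : V)) :
    (∀ x : V, JV (JV x) = -x) ∧ (∀ x y : V, ⟪JV x, JV y⟫ = ⟪x, y⟫) ∧
      Even (Module.finrank ℝ V) := by
  -- the projected map as a linear endomorphism of V
  set P : V →ₗ[ℝ] V :=
    ((Submodule.orthogonalProjectionOnto V).toLinearMap.comp J₀).comp V.subtype with hP
  have hPapp : ∀ x : V,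
      P x = (Submodule.orthogonalProjectionOnto V (J₀ (x : EuclideanSpace ℝ (Fin (2 * m)))) : V) := by
    intro x; rfl
  -- skewness of J₀
  have hskew : ∀ x y : EuclideanSpace ℝ (Fin (2 * m)), ⟪J₀ x, y⟫ = -⟪x, J₀ y⟫ := by
    intro x y
    have := hJinner x (J₀ y)
    rw [hJ2 y] at this
    rw [← this, inner_neg_right]
    ring
  -- P is skew-symmetric on V
  have hPskew : ∀ x y : V, ⟪P x, y⟫ = -⟪x, P y⟫ := by
    intro x y
    rw [hPapp, hPapp, Submodule.inner_orthogonalProjectionOnto_eq_of_mem_right,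
      Submodule.inner_orthogonalProjectionOnto_eq_of_mem_left]
    exact hskew x y
  -- norms : ‖P x‖ = cos α ‖x‖
  have hPnorm : ∀ x : V, ‖P x‖ = Real.cos α * ‖x‖ := by
    intro x; rw [hPapp]; exact hslant x
  -- polarization: inner products
  have hPinner : ∀ x y : V, ⟪P x, P y⟫ = Real.cos α ^ 2 * ⟪x, y⟫ := by
    intro x y
    have h1 : ‖P x + P y‖ ^ 2 = ‖P x‖ ^ 2 + 2 * ⟪P x, P y⟫ + ‖P y‖ ^ 2 :=
      norm_add_sq_real _ _
    have h2 : ‖x + y‖ ^ 2 = ‖x‖ ^ 2 + 2 * ⟪x, y⟫ + ‖y‖ ^ 2 := norm_add_sq_real _ _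
    have h3 : P x + P y = P (x + y) := (map_add P x y).symm
    rw [h3, hPnorm, hPnorm, hPnorm, mul_pow, mul_pow, mul_pow, h2] at h1
    nlinarith [h1]
  -- JV as a linear map
  have hJVP : ∀ x : V, JV x = (Real.cos α)⁻¹ • P x := by
    intro x; rw [hJV, hPapp]
  have hJVinner : ∀ x y : V, ⟪JV x, JV y⟫ = ⟪x, y⟫ := by
    intro x y
    rw [hJVP, hJVP, real_inner_smul_left (P x) ((Real.cos α)⁻¹ • P y) _,
      real_inner_smul_right (P x) (P y) _, hPinner]
    field_simp
  have hJVskew : ∀ x y : V, ⟪JV x, y⟫ = -⟪x, JV y⟫ := by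
    intro x y
    rw [hJVP, hJVP, real_inner_smul_left (P x) y _, real_inner_smul_right x (P y) _, hPskew]
    ring
  have hJ2V : ∀ x : V, JV (JV x) = -x := by
    intro x
    apply ext_inner_right ℝ
    intro y
    rw [hJVskew, hJVinner, inner_neg_left]
  refine ⟨hJ2V, hJVinner, ?_⟩
  -- evenness via determinant
  set J' : V →ₗ[ℝ] V := (Real.cos α)⁻¹ • P with hJ'
  have hJ'app : ∀ x : V, J' x = JV x := by
    intro x; rw [hJVP]; rfl
  have hcomp : J'.comp J' = -LinearMap.id := by
    ext x
    simp only [LinearMap.comp_apply, LinearMap.neg_apply, LinearMap.id_apply]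
    rw [hJ'app, hJ'app, hJ2V]
  have hdet : LinearMap.det J' * LinearMap.det J' = (-1 : ℝ) ^ Module.finrank ℝ V := by
    rw [← LinearMap.det_comp, hcomp]
    have : (-LinearMap.id : V →ₗ[ℝ] V) = (-1 : ℝ) • LinearMap.id := by
      ext x; simp
    rw [this, LinearMap.det_smul, LinearMap.det_id, mul_one]
  by_contra hodd
  have hodd' : Odd (Module.finrank ℝ V) := Nat.not_even_iff_odd.mp hodd
  rw [hodd'.neg_one_pow] at hdet
  nlinarith [sq_nonneg (LinearMap.det J'), hdet]
end

section
/- Any subspace V of a real inner product space V' with compatible complex structure J that satisfies the slant condition ‖π_V(JX)‖ = cos(α)·‖X‖ for all X ∈ V with cos α ≠ 0 has even dimension. -/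
open scoped RealInnerProductSpace

/-- A slant subspace (with `cos α ≠ 0`) of a real inner product space
with compatible complex structure has even dimension. -/
theorem slant_subspace_even_dimensional
    {V' : Type*} [NormedAddCommGroup V'] [InnerProductSpace ℝ V'] [FiniteDimensional ℝ V']
    (J : V' →ₗ[ℝ] V')
    (hJ2 : ∀ x : V', J (J x) = -x)
    (hJinner : ∀ x y : V', ⟪J x, J y⟫ = ⟪x, y⟫)
    (V : Submodule ℝ V')
    (α : ℝ) (hα : Real.cos α ≠ 0)
    (hslant : ∀ x : V, ‖(V.orthogonalProjectionOnto (J (x : V')) : V)‖ = Real.cos α * ‖x‖) :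
    Even (Module.finrank ℝ V) := by
  set c := Real.cos α with hc
  -- the tangential operator T : V → V
  set T : V →ₗ[ℝ] V :=
    (V.orthogonalProjectionOnto).toLinearMap ∘ₗ J ∘ₗ V.subtype with hT
  have hTapp : ∀ x : V, T x = V.orthogonalProjectionOnto (J (x : V')) := fun x => rfl
  -- inner product identity: ⟪T x, y⟫ = ⟪J x, y⟫
  have hTin : ∀ x y : V, ⟪T x, y⟫ = ⟪J (x : V'), (y : V')⟫ := by
    intro x y
    rw [hTapp]
    exact Submodule.inner_orthogonalProjectionOnto_eq_of_mem_right (K := V) y (J (x : V'))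
  -- J is skew: ⟪J u, v⟫ = -⟪u, J v⟫
  have hJskew : ∀ u v : V', ⟪J u, v⟫ = -⟪u, J v⟫ := by
    intro u v
    have := hJinner u (J v)
    rw [hJ2 v] at this
    rw [inner_neg_right] at this
    linarith
  -- T is skew
  have hTskew : ∀ x y : V, ⟪T x, y⟫ = -⟪x, T y⟫ := by
    intro x y
    have e1 : (⟪T x, y⟫ : ℝ) = ⟪J (x : V'), (y : V')⟫ := hTin x y
    have e2 : (⟪T y, x⟫ : ℝ) = ⟪J (y : V'), (x : V')⟫ := hTin y x
    have e3 := hJskew (x : V') (y : V')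
    have c1 : (⟪T y, x⟫ : ℝ) = ⟪x, T y⟫ := real_inner_comm _ _
    have c2 : (⟪J (y : V'), (x : V')⟫ : ℝ) = ⟪(x : V'), J (y : V')⟫ :=
      real_inner_comm _ _
    linarith
  -- norms
  have hnorm : ∀ x : V, ‖T x‖ = c * ‖x‖ := fun x => by rw [hTapp]; exact hslant x
  -- polarization: ⟪T x, T y⟫ = c^2 * ⟪x, y⟫
  have hpol : ∀ x y : V, ⟪T x, T y⟫ = c ^ 2 * ⟪x, y⟫ := by
    intro x y
    have h1 : ‖T x + T y‖ ^ 2 = c ^ 2 * ‖x + y‖ ^ 2 := by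
      have := hnorm (x + y)
      rw [map_add] at this
      rw [this]; ring
    have h2 := hnorm x
    have h3 := hnorm y
    have e1 : ‖T x + T y‖ ^ 2 = ‖T x‖ ^ 2 + 2 * ⟪T x, T y⟫ + ‖T y‖ ^ 2 := by
      rw [@norm_add_sq_real]
    have e2 : ‖x + y‖ ^ 2 = ‖x‖ ^ 2 + 2 * ⟪x, y⟫ + ‖y‖ ^ 2 := by
      rw [@norm_add_sq_real]
    rw [e1, e2, h2, h3] at h1
    nlinarith
  -- T² = -c² • id
  have hT2 : T ∘ₗ T = (-(c ^ 2)) • LinearMap.id := by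
    apply LinearMap.ext
    intro x
    apply ext_inner_right ℝ
    intro y
    simp only [LinearMap.comp_apply, LinearMap.smul_apply, LinearMap.id_apply]
    rw [hTskew (T x) y, hpol x y, real_inner_smul_left]
    ring
  -- determinant argument
  have hdet : (LinearMap.det T) ^ 2 = (-(c ^ 2)) ^ (Module.finrank ℝ V) := by
    rw [sq, ← LinearMap.det_comp, hT2, LinearMap.det_smul, LinearMap.det_id, mul_one]
  rcases Nat.even_or_odd (Module.finrank ℝ V) with h | h
  · exact h
  · exfalso
    rw [h.neg_pow] at hdet
    have hc2 : (0:ℝ) < c ^ 2 := by positivity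
    nlinarith [sq_nonneg (LinearMap.det T), pow_pos hc2 (Module.finrank ℝ V)]
end

section
/- Let N be a proper slant submanifold of a Kaehler manifold M (slant angle θ with 0 < θ < π/2), with F the normal-valued part of J on TN. If ∇F = 0, then N is austere: for each unit tangent eigenvector X of Q = P² with eigenvalue λ ≠ 0, setting X* = PX/√(-λ), one has h(X,X) = -h(X*, X*). In particular N is minimal. -/
/-- A proper slant submanifold of a Kaehler manifold with `∇F = 0`
is austere: presented pointwise/abstractly, with `P` the tangential part of `J`,
`h` the (symmetric bilinear) second fundamental form, `f` the normal part of `J`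
on the normal bundle, and the condition `∇F = 0` in its Kaehler form
`f h(X,Y) = h(X,PY)`, every unit eigenvector `X` of `Q = P²` with eigenvalue
`λ ≠ 0` satisfies `h(X,X) = -h(X*,X*)` for `X* = PX/√(-λ)`.  In particular `N`
is minimal. -/
theorem parallel_F_implies_austere
    {𝒯 𝒩 : Type*} [NormedAddCommGroup 𝒯] [InnerProductSpace ℝ 𝒯]
    [AddCommGroup 𝒩] [Module ℝ 𝒩]
    (P : 𝒯 →ₗ[ℝ] 𝒯) (h : 𝒯 →ₗ[ℝ] 𝒯 →ₗ[ℝ] 𝒩) (f : 𝒩 →ₗ[ℝ] 𝒩)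
    (hhsymm : ∀ X Y : 𝒯, h X Y = h Y X)
    -- proper slant with slant angle θ, 0 < θ < π/2
    (θ : ℝ) (hθ : 0 < θ ∧ θ < Real.pi / 2)
    (hP2 : ∀ Y : 𝒯, P (P Y) = -(Real.cos θ ^ 2) • Y)
    -- ∇F = 0, in its Kaehler-equivalent form
    (hF : ∀ X Y : 𝒯, f (h X Y) = h X (P Y))
    -- a unit eigenvector of Q = P² with eigenvalue λ ≠ 0
    (X : 𝒯) (hX : ‖X‖ = 1) (lam : ℝ) (hlam : lam ≠ 0)
    (heig : P (P X) = lam • X) :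
    h X X = -(h ((Real.sqrt (-lam))⁻¹ • P X) ((Real.sqrt (-lam))⁻¹ • P X)) := by
  -- X ≠ 0
  have hX0 : X ≠ 0 := by
    intro h0
    rw [h0, norm_zero] at hX
    norm_num at hX
  -- cos θ > 0
  have hcos : 0 < Real.cos θ :=
    Real.cos_pos_of_mem_Ioo ⟨by linarith [Real.pi_pos, hθ.1], hθ.2⟩
  -- lam = -cos² θ
  have hlamval : lam = -(Real.cos θ ^ 2) := by
    have := (hP2 X).symm.trans heig
    by_contra hne
    exact hX0 (by
      have h2 : (-(Real.cos θ ^ 2) - lam) • X = 0 := by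
        rw [sub_smul, this, sub_self]
      have h3 : -(Real.cos θ ^ 2) - lam ≠ 0 := fun hc => hne (by linarith [sub_eq_zero.mp hc])
      exact (smul_eq_zero.mp h2).resolve_left h3)
  have hsqrt : Real.sqrt (-lam) = Real.cos θ := by
    rw [hlamval, neg_neg, Real.sqrt_sq hcos.le]
  -- swap lemma
  have hswap : ∀ Y Z : 𝒯, h (P Y) Z = h Y (P Z) := by
    intro Y Z
    rw [hhsymm, ← hF, hhsymm Z Y, hF]
  have hkey : h (P X) (P X) = lam • h X X := by
    rw [hswap, heig, map_smul]
  rw [hsqrt]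
  simp only [map_smul, LinearMap.smul_apply, hkey]
  have hc : (Real.cos θ)⁻¹ • (Real.cos θ)⁻¹ • lam • h X X = (-1 : ℝ) • h X X := by
    rw [smul_smul, smul_smul, hlamval]
    congr 1
    field_simp
  rw [hc, neg_smul, one_smul, neg_neg]
end
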